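/- arXiv:2104.08996 — 2 statements merged into one kernel-verified Lean document; each statement's English description precedes it below -/
import Mathlib

section
/- Let α > 1 and let F be the truncated derivative of the double-well potential defined piecewise by F(c) = ((3α²−1)/4) c − (α³/4 + 3α²/8 − 1/8) for c > (1+α)/2, F(c) = (c² − (3/2)c + 1/2) c for (1−α)/2 ≤ c ≤ (1+α)/2, and F(c) = ((3α²−1)/4) c + (α³/4 − 3α²/8 + 1/8) for c < (1−α)/2. Then for all x ≠ y, −1/4 ≤ (F(x) − F(y))/(x − y) ≤ L, where L = (3α² − 1)/4. -/
set_option maxHeartbeats 2000000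

noncomputable def Fexpr (α c : ℝ) : ℝ :=
  if c > (1 + α) / 2 then ((3 * α^2 - 1) / 4) * c - (α^3 / 4 + 3 * α^2 / 8 - 1/8)
  else if c < (1 - α) / 2 then ((3 * α^2 - 1) / 4) * c + (α^3 / 4 - 3 * α^2 / 8 + 1/8)
  else (c^2 - (3/2) * c + 1/2) * c

lemma mid_lower (u v : ℝ) (huv : u ≤ v) :
    -(1/4) * (v - u) ≤ (v^2 - (3/2)*v + 1/2)*v - (u^2 - (3/2)*u + 1/2)*u := by
  nlinarith [mul_nonneg (sub_nonneg.2 huv) (sq_nonneg (u + v - 1)),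
    mul_nonneg (sub_nonneg.2 huv) (sq_nonneg (u - v))]

lemma mid_upper (α u v : ℝ) (huv : u ≤ v) (h1 : (1 - α)/2 ≤ u) (h2 : v ≤ (1 + α)/2) :
    (v^2 - (3/2)*v + 1/2)*v - (u^2 - (3/2)*u + 1/2)*u ≤ (3 * α^2 - 1)/4 * (v - u) := by
  nlinarith [mul_nonneg (sub_nonneg.2 huv) (mul_nonneg (by linarith : (0:ℝ) ≤ α - (2*u-1)) (by linarith : (0:ℝ) ≤ α - (2*v-1))),
    mul_nonneg (sub_nonneg.2 huv) (mul_nonneg (by linarith : (0:ℝ) ≤ α + (2*u-1)) (by linarith : (0:ℝ) ≤ α + (2*v-1))),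
    mul_nonneg (sub_nonneg.2 huv) (mul_nonneg (by linarith : (0:ℝ) ≤ α + (2*u-1)) (by linarith : (0:ℝ) ≤ α - (2*v-1))),
    mul_nonneg (sub_nonneg.2 huv) (sq_nonneg (u - v)),
    mul_nonneg (sub_nonneg.2 huv) (sq_nonneg (u + v - 1))]

lemma key (α x y : ℝ) (hα : 1 < α) (hxy : x < y) :
    -(1/4) * (y - x) ≤ Fexpr α y - Fexpr α x ∧
    Fexpr α y - Fexpr α x ≤ (3 * α^2 - 1)/4 * (y - x) := by
  have hL : (0:ℝ) ≤ (3 * α^2 - 1)/4 := by nlinarith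
  have hab : (1 - α)/2 ≤ (1 + α)/2 := by linarith
  unfold Fexpr
  split_ifs with h1 h2 h3 h4 h5 h6 h7 h8
  · constructor <;> nlinarith [mul_nonneg hL (by linarith : (0:ℝ) ≤ y - x)]
  · -- y > b, x < a
    have l1 := mid_lower ((1-α)/2) ((1+α)/2) hab
    have l2 := mid_upper α ((1-α)/2) ((1+α)/2) hab le_rfl le_rfl
    constructor <;>
      nlinarith [mul_nonneg hL (by linarith : (0:ℝ) ≤ y - (1+α)/2),
        mul_nonneg hL (by linarith : (0:ℝ) ≤ (1-α)/2 - x)]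
  · -- y > b, x mid
    have hx1 : (1 - α)/2 ≤ x := by linarith
    have hx2 : x ≤ (1 + α)/2 := by linarith
    have l1 := mid_lower x ((1+α)/2) hx2
    have l2 := mid_upper α x ((1+α)/2) hx2 hx1 le_rfl
    constructor <;>
      nlinarith [mul_nonneg hL (by linarith : (0:ℝ) ≤ y - (1+α)/2)]
  · linarith
  · constructor <;> nlinarith [mul_nonneg hL (by linarith : (0:ℝ) ≤ y - x)]
  · linarith
  · linarith
  · -- x < a, y mid
    have hy1 : (1 - α)/2 ≤ y := by linarith
    have hy2 : y ≤ (1 + α)/2 := by linarith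
    have l1 := mid_lower ((1-α)/2) y hy1
    have l2 := mid_upper α ((1-α)/2) y hy1 le_rfl hy2
    constructor <;>
      nlinarith [mul_nonneg hL (by linarith : (0:ℝ) ≤ (1-α)/2 - x)]
  · -- both mid
    exact ⟨mid_lower x y hxy.le,
      mid_upper α x y hxy.le (by linarith) (by linarith)⟩

theorem truncated_potential_deriv_slope_bounds
    (α : ℝ) (hα : 1 < α) (F : ℝ → ℝ)
    (hF : ∀ c : ℝ, F c =
      if c > (1 + α) / 2 then ((3 * α^2 - 1) / 4) * c - (α^3 / 4 + 3 * α^2 / 8 - 1/8)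
      else if c < (1 - α) / 2 then ((3 * α^2 - 1) / 4) * c + (α^3 / 4 - 3 * α^2 / 8 + 1/8)
      else (c^2 - (3/2) * c + 1/2) * c) :
    ∀ x y : ℝ, x ≠ y →
      -(1/4) ≤ (F x - F y) / (x - y) ∧ (F x - F y) / (x - y) ≤ (3 * α^2 - 1) / 4 := by
  have hFe : ∀ c, F c = Fexpr α c := fun c => (hF c).trans rfl
  intro x y hne
  rcases hne.lt_or_gt with h | h
  · obtain ⟨l, u⟩ := key α x y hα h
    have hd : 0 < y - x := by linarith
    have e : (F x - F y) / (x - y) = (Fexpr α y - Fexpr α x) / (y - x) := by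
      rw [hFe x, hFe y, div_eq_div_iff (by linarith) (by linarith)]
      ring
    rw [e]
    constructor
    · rw [le_div_iff₀ hd]; linarith
    · rw [div_le_iff₀ hd]; linarith
  · obtain ⟨l, u⟩ := key α y x hα h
    have hd : 0 < x - y := by linarith
    rw [hFe x, hFe y]
    constructor
    · rw [le_div_iff₀ hd]; linarith
    · rw [div_le_iff₀ hd]; linarith
end

section
/- With F and L = (3α²−1)/4 as above (α > 1 sufficiently large, say α ≥ 2), |F(x)| ≤ L |x| for all real x. -/
theorem truncated_potential_deriv_growth
    (α : ℝ) (hα : 2 ≤ α) (F : ℝ → ℝ)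
    (hF : ∀ c : ℝ, F c =
      if c > (1 + α) / 2 then ((3 * α^2 - 1) / 4) * c - (α^3 / 4 + 3 * α^2 / 8 - 1/8)
      else if c < (1 - α) / 2 then ((3 * α^2 - 1) / 4) * c + (α^3 / 4 - 3 * α^2 / 8 + 1/8)
      else c^3 - (3/2) * c^2 + (1/2) * c) :
    ∀ x : ℝ, |F x| ≤ ((3 * α^2 - 1) / 4) * |x| := by
  intro x
  rw [hF x]
  split_ifs with h1 h2
  · -- x > (1+α)/2 > 0
    have hx : 0 < x := by nlinarith
    rw [abs_of_pos hx]
    rw [abs_le]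
    constructor
    · nlinarith [sq_nonneg α, sq_nonneg (α - 2), sq_nonneg (α + 1)]
    · nlinarith [sq_nonneg α, sq_nonneg (α - 2)]
  · -- x < (1-α)/2 < 0
    have hx : x < 0 := by nlinarith
    rw [abs_of_neg hx]
    rw [abs_le]
    constructor
    · nlinarith [sq_nonneg α, sq_nonneg (α - 2)]
    · nlinarith [sq_nonneg α, sq_nonneg (α - 2), sq_nonneg (α - 1)]
  · -- middle piece
    push_neg at h1 h2
    have hq : |x^2 - (3/2) * x + 1/2| ≤ (3 * α^2 - 1) / 4 := by
      rw [abs_le]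
      constructor
      · nlinarith [sq_nonneg (x - 3/4), sq_nonneg α]
      · nlinarith [mul_nonneg (sub_nonneg.2 h2) (sub_nonneg.2 h1), sq_nonneg α]
    calc |x^3 - (3/2) * x^2 + (1/2) * x| = |x^2 - (3/2) * x + 1/2| * |x| := by
            rw [← abs_mul]; ring_nf
      _ ≤ ((3 * α^2 - 1) / 4) * |x| := by
            exact mul_le_mul_of_nonneg_right hq (abs_nonneg x)
end
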